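/- For every symmetric adversary A over a finite set Π of n processes, setcon(A) = |{k ∈ {1,…,n} : ∃ S ∈ A with |S| = k}|, i.e., the set consensus power of a symmetric adversary equals the number of distinct cardinalities of its live sets. -/

import Mathlib

variable {α : Type*} [DecidableEq α]

/-- The restriction `A|_P` of an adversary `A` to a set of processes `P`:
the live sets of `A` that are contained in `P`. -/
def restrict (A : Finset (Finset α)) (P : Finset α) : Finset (Finset α) :=
  A.filter fun S => S ⊆ P

/-- The set consensus power `setcon A` of an adversary `A`:
`setcon ∅ = 0` and, for `A ≠ ∅`,
`setcon A = 1 + max_{S ∈ A} min_{a ∈ S} setcon (A|_{S \ {a}})`. -/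
def setcon (A : Finset (Finset α)) : ℕ :=
  if A = ∅ then 0
  else 1 + A.attach.sup fun S =>
    (S.1.attach.image fun a => setcon (restrict A (S.1.erase a.1))).min.untopD 0
termination_by A.card
decreasing_by
  apply Finset.card_lt_card
  rw [Finset.ssubset_def]
  refine ⟨Finset.filter_subset _ _, fun hsub => ?_⟩
  have hmem := hsub S.2
  rw [restrict, Finset.mem_filter] at hmem
  exact Finset.notMem_erase a.1 S.1 (hmem.2 a.2)

/-- The restriction `A|_{P,Q}`: live sets of `A` contained in `P` that intersect `Q`. -/
def restrictTo (A : Finset (Finset α)) (P Q : Finset α) : Finset (Finset α) :=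
  (restrict A P).filter fun S => (S ∩ Q).Nonempty

/-- An adversary is fair if for all `P` and all `Q ⊆ P`,
`setcon (A|_{P,Q}) = min |Q| (setcon (A|_P))`. -/
def Fair (A : Finset (Finset α)) : Prop :=
  ∀ P Q : Finset α, Q ⊆ P →
    setcon (restrictTo A P Q) = min Q.card (setcon (restrict A P))

/-- `csize A`: the minimal cardinality of a hitting set of `A`, i.e. of a set
intersecting every live set of `A`. -/
noncomputable def csize (A : Finset (Finset α)) : ℕ :=
  sInf {k | ∃ H : Finset α, H.card = k ∧ ∀ S ∈ A, (H ∩ S).Nonempty}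

/-- Number of distinct cardinalities of live sets of `A` in `[1, m]`. -/
def nsizes (A : Finset (Finset α)) (m : ℕ) : ℕ :=
  ((Finset.Icc 1 m).filter fun k => ∃ S ∈ A, S.card = k).card

lemma nsizes_mono (A : Finset (Finset α)) {m m' : ℕ} (h : m ≤ m') :
    nsizes A m ≤ nsizes A m' :=
  Finset.card_le_card (Finset.filter_subset_filter _
    (Finset.Icc_subset_Icc_right h))

lemma mem_restrict {A : Finset (Finset α)} {P S : Finset α} :
    S ∈ restrict A P ↔ S ∈ A ∧ S ⊆ P := by
  simp [restrict, Finset.mem_filter]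

lemma restrict_restrict (A : Finset (Finset α)) {P Q : Finset α} (h : Q ⊆ P) :
    restrict (restrict A P) Q = restrict A Q := by
  unfold restrict
  rw [Finset.filter_filter]
  apply Finset.filter_congr
  intro S _
  constructor
  · rintro ⟨_, h2⟩; exact h2
  · intro h1; exact ⟨h1.trans h, h1⟩

lemma setcon_restrict_symmetric (A : Finset (Finset α))
    (hne : ∀ S ∈ A, S.Nonempty)
    (hsym : ∀ S ∈ A, ∀ S' : Finset α, S'.card = S.card → S' ∈ A) :
    ∀ n : ℕ, ∀ P : Finset α, P.card = n →
      setcon (restrict A P) = nsizes A P.card := by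
  intro n
  induction n using Nat.strong_induction_on with
  | _ n ih =>
    intro P hP
    rw [setcon]
    by_cases h : restrict A P = ∅
    · rw [if_pos h]
      symm
      rw [nsizes, Finset.card_eq_zero, Finset.filter_eq_empty_iff]
      rintro k hk ⟨S, hS, hScard⟩
      rw [Finset.mem_Icc] at hk
      obtain ⟨S', hS'P, hS'card⟩ := Finset.exists_subset_card_eq (s := P) (n := k) (by omega)
      have : S' ∈ restrict A P :=
        mem_restrict.2 ⟨hsym S hS S' (by omega), hS'P⟩
      simp [h] at this
    · rw [if_neg h]
      have hBne : (restrict A P).Nonempty := Finset.nonempty_iff_ne_empty.2 h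
      -- each inner term is constant
      have hterm : ∀ S : {x // x ∈ restrict A P},
          ((S.1.attach.image fun a =>
            setcon (restrict (restrict A P) (S.1.erase a.1))).min.untopD 0)
          = nsizes A (S.1.card - 1) := by
        rintro ⟨S, hS⟩
        obtain ⟨hSA, hSP⟩ := mem_restrict.1 hS
        have hSnon : S.Nonempty := hne S hSA
        have hS1 : 1 ≤ S.card := Finset.card_pos.2 hSnon
        have hSle : S.card ≤ P.card := Finset.card_le_card hSP
        have hfun : ∀ a : {x // x ∈ S},
            setcon (restrict (restrict A P) (S.erase a.1))
              = nsizes A (S.card - 1) := by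
          rintro ⟨a, ha⟩
          have hsub : S.erase a ⊆ P := (Finset.erase_subset a S).trans hSP
          rw [restrict_restrict A hsub]
          have hcard : (S.erase a).card = S.card - 1 :=
            Finset.card_erase_of_mem ha
          have hlt : (S.erase a).card < n := by omega
          rw [ih _ hlt (S.erase a) rfl, hcard]
        calc ((S.attach.image fun a =>
              setcon (restrict (restrict A P) (S.erase a.1))).min.untopD 0)
            = (((S.attach).image fun _ =>
                nsizes A (S.card - 1)).min.untopD 0) := by
              rw [funext hfun]
          _ = nsizes A (S.card - 1) := by
              rw [Finset.image_const (Finset.attach_nonempty_iff.2 hSnon),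
                Finset.min_singleton, WithTop.untopD_coe]
      rw [Finset.sup_congr rfl (fun S _ => hterm S)]
      -- take a live set of maximal cardinality
      obtain ⟨S₀, hS₀, hmax⟩ :=
        Finset.exists_max_image (restrict A P) Finset.card hBne
      obtain ⟨hS₀A, hS₀P⟩ := mem_restrict.1 hS₀
      have hc1 : 1 ≤ S₀.card := Finset.card_pos.2 (hne S₀ hS₀A)
      have hcP : S₀.card ≤ P.card := Finset.card_le_card hS₀P
      have hsup : ((restrict A P).attach.sup fun S => nsizes A (S.1.card - 1))
          = nsizes A (S₀.card - 1) := by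
        apply le_antisymm
        · exact Finset.sup_le fun S _ =>
            nsizes_mono A (by have := hmax S.1 S.2; omega)
        · exact Finset.le_sup (f := fun S : {x // x ∈ restrict A P} =>
            nsizes A (S.1.card - 1)) (Finset.mem_attach _ ⟨S₀, hS₀⟩)
      rw [hsup]
      -- nsizes A P.card = nsizes A S₀.card
      have hstep1 : nsizes A P.card = nsizes A S₀.card := by
        unfold nsizes
        congr 1
        apply Finset.Subset.antisymm
        · intro k hk
          rw [Finset.mem_filter, Finset.mem_Icc] at hk
          obtain ⟨⟨hk1, hk2⟩, S, hS, hScard⟩ := hk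
          obtain ⟨S', hS'P, hS'card⟩ := Finset.exists_subset_card_eq (s := P) (n := k) hk2
          have hS'A : S' ∈ A := hsym S hS S' (by omega)
          have : S'.card ≤ S₀.card := hmax S' (mem_restrict.2 ⟨hS'A, hS'P⟩)
          rw [Finset.mem_filter, Finset.mem_Icc]
          exact ⟨⟨hk1, by omega⟩, S, hS, hScard⟩
        · exact Finset.filter_subset_filter _
            (Finset.Icc_subset_Icc_right hcP)
      -- nsizes A S₀.card = 1 + nsizes A (S₀.card - 1)
      have hstep2 : nsizes A S₀.card = 1 + nsizes A (S₀.card - 1) := by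
        unfold nsizes
        have hIcc : Finset.Icc 1 S₀.card
            = insert S₀.card (Finset.Icc 1 (S₀.card - 1)) := by
          ext k
          simp only [Finset.mem_Icc, Finset.mem_insert]
          omega
        rw [hIcc, Finset.filter_insert, if_pos ⟨S₀, hS₀A, rfl⟩,
          Finset.card_insert_of_notMem, Nat.add_comm]
        intro hmem
        rw [Finset.mem_filter, Finset.mem_Icc] at hmem
        omega
      omega

/-- For a symmetric adversary, `setcon A` equals the number of
distinct cardinalities `k ∈ {1, …, n}` of its live sets. -/
theorem setcon_symmetric_eq_card_sizes [Fintype α] (A : Finset (Finset α))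
    (hne : ∀ S ∈ A, S.Nonempty)
    (hsym : ∀ S ∈ A, ∀ S' : Finset α, S'.card = S.card → S' ∈ A) :
    setcon A =
      ((Finset.Icc 1 (Fintype.card α)).filter fun k => ∃ S ∈ A, S.card = k).card := by
  have h1 : restrict A (Finset.univ : Finset α) = A :=
    Finset.filter_true_of_mem fun S _ => Finset.subset_univ S
  have := setcon_restrict_symmetric A hne hsym
    (Finset.univ : Finset α).card Finset.univ rfl
  rw [h1] at this
  rw [this, nsizes, Finset.card_univ]
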